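/- Let A be an n-by-n complex matrix and j > a(A) a positive integer. If A, A², …, A^j are all partial isometries, then A^ℓ is a partial isometry for every integer ℓ ≥ 1. -/

import Mathlib

open Matrix

noncomputable section

/-- An `ι`-by-`ι` complex matrix `A` is a *partial isometry* if `‖Ax‖ = ‖x‖` for every
vector `x` in the orthogonal complement of `ker A` (Euclidean structure). -/
def Matrix.IsPartialIsometry {ι : Type*} [Fintype ι] [DecidableEq ι]
    (A : Matrix ι ι ℂ) : Prop :=
  ∀ x ∈ (LinearMap.ker (Matrix.toEuclideanLin A))ᗮ, ‖Matrix.toEuclideanLin A x‖ = ‖x‖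

/-- The *power partial isometry index* `p(A)`: the supremum (in `ℕ∞`, possibly `⊤`) of the
nonnegative integers `j` such that `I, A, A², …, A^j` are all partial isometries. -/
def Matrix.pIndex {ι : Type*} [Fintype ι] [DecidableEq ι] (A : Matrix ι ι ℂ) : ℕ∞ :=
  sSup ((↑) '' {j : ℕ | ∀ i ≤ j, (A ^ i).IsPartialIsometry})

/-- The *ascent* `a(A)`: the smallest nonnegative integer `k` with `ker A^k = ker A^(k+1)`. -/
def Matrix.ascent {ι : Type*} [Fintype ι] [DecidableEq ι] (A : Matrix ι ι ℂ) : ℕ :=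
  sInf {k : ℕ | LinearMap.ker (Matrix.toEuclideanLin (A ^ k)) =
    LinearMap.ker (Matrix.toEuclideanLin (A ^ (k + 1)))}

/-- `A` is unitarily similar to `B` (allowing different, necessarily equipotent, index types):
`B = U* A U` for some unitary `U`. -/
def Matrix.UnitarilySimilarTo {ι κ : Type*} [Fintype ι] [Fintype κ] [DecidableEq ι]
    [DecidableEq κ] (A : Matrix ι ι ℂ) (B : Matrix κ κ ℂ) : Prop :=
  ∃ U : Matrix ι κ ℂ, Uᴴ * U = 1 ∧ U * Uᴴ = 1 ∧ B = Uᴴ * A * U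

/-- The `q`-by-`q` nilpotent Jordan block `J_q`. -/
def JordanBlock (q : ℕ) : Matrix (Fin q) (Fin q) ℂ :=
  Matrix.of fun a b => if (b : ℕ) = (a : ℕ) + 1 then 1 else 0

/-- `A` is of class `S_n`: a contraction whose eigenvalues all have moduli strictly
less than `1` and with `rank (1 - A*A) = 1`. -/
def Matrix.IsClassSn {n : ℕ} (A : Matrix (Fin n) (Fin n) ℂ) : Prop :=
  (∀ x : EuclideanSpace ℂ (Fin n), ‖Matrix.toEuclideanLin A x‖ ≤ ‖x‖) ∧
  (∀ z ∈ spectrum ℂ A, ‖z‖ < 1) ∧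
  (1 - Aᴴ * A).rank = 1



lemma toEuclideanLin_pow {n : ℕ} (A : Matrix (Fin n) (Fin n) ℂ) (k : ℕ) :
    Matrix.toEuclideanLin (A ^ k) = (Matrix.toEuclideanLin A) ^ k := by
  induction k with
  | zero =>
      ext x
      simp [Matrix.toEuclideanLin_apply]
  | succ k ih =>
      rw [pow_succ, pow_succ]
      ext x
      rw [← ih]
      simp [Matrix.toEuclideanLin_apply, Matrix.mulVec_mulVec,
        Module.End.mul_apply]

lemma contraction_of_pi {n : ℕ} (f : EuclideanSpace ℂ (Fin n) →ₗ[ℂ] EuclideanSpace ℂ (Fin n))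
    (hf : ∀ x ∈ (LinearMap.ker f)ᗮ, ‖f x‖ = ‖x‖) :
    (∀ y, ‖f y‖ ≤ ‖y‖) ∧ (∀ y, ‖f y‖ = ‖y‖ → y ∈ (LinearMap.ker f)ᗮ) := by
  have key : ∀ y, ∃ u ∈ LinearMap.ker f, ∃ v ∈ (LinearMap.ker f)ᗮ,
      y = u + v ∧ ‖f y‖ = ‖v‖ ∧ ‖y‖ * ‖y‖ = ‖u‖ * ‖u‖ + ‖v‖ * ‖v‖ := by
    intro y
    obtain ⟨u, hu, v, hv, rfl⟩ := (LinearMap.ker f).exists_add_mem_mem_orthogonal y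
    refine ⟨u, hu, v, hv, rfl, ?_, ?_⟩
    · rw [map_add, LinearMap.mem_ker.mp hu, zero_add, hf v hv]
    · exact norm_add_sq_eq_norm_sq_add_norm_sq_of_inner_eq_zero u v
        (Submodule.inner_right_of_mem_orthogonal hu hv)
  constructor
  · intro y
    obtain ⟨u, hu, v, hv, rfl, h1, h2⟩ := key y
    rw [h1]
    nlinarith [norm_nonneg v, norm_nonneg (u + v), norm_nonneg u]
  · intro y hy
    obtain ⟨u, hu, v, hv, rfl, h1, h2⟩ := key y
    have hu0 : u = 0 := by
      have : ‖u‖ = 0 := by nlinarith [norm_nonneg u, norm_nonneg (u + v), hy ▸ h1]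
      simpa using this
    rw [hu0, zero_add]; exact hv

/-- If `j > a(A)` and `A, A², …, A^j` are all partial isometries, then `A^ℓ` is a partial
isometry for every `ℓ ≥ 1`. -/
theorem isPartialIsometry_pow_of_gt_ascent (n : ℕ) (A : Matrix (Fin n) (Fin n) ℂ)
    (j : ℕ) (hj : A.ascent < j) (h : ∀ i : ℕ, 1 ≤ i → i ≤ j → (A ^ i).IsPartialIsometry) :
    ∀ ℓ : ℕ, 1 ≤ ℓ → (A ^ ℓ).IsPartialIsometry := by
  set f := Matrix.toEuclideanLin A with hfdef
  set a := A.ascent with hadef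
  -- partial isometry of powers, in terms of f
  have hpi : ∀ i : ℕ, 1 ≤ i → i ≤ j → ∀ x ∈ (LinearMap.ker (f ^ i))ᗮ, ‖(f ^ i) x‖ = ‖x‖ := by
    intro i h1 h2 x hx
    have h' := h i h1 h2
    rw [Matrix.IsPartialIsometry, toEuclideanLin_pow] at h'
    exact h' x hx
  have hj1 : 1 ≤ j := Nat.one_le_iff_ne_zero.mpr (by omega)
  -- the ascent property
  have hasc : LinearMap.ker (f ^ a) = LinearMap.ker (f ^ (a + 1)) := by
    have hne : {k : ℕ | LinearMap.ker (Matrix.toEuclideanLin (A ^ k)) =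
        LinearMap.ker (Matrix.toEuclideanLin (A ^ (k + 1)))}.Nonempty := by
      obtain ⟨k, -, hk⟩ := Module.End.exists_ker_pow_eq_ker_pow_succ f
      refine ⟨k, ?_⟩
      simp only [Set.mem_setOf_eq, toEuclideanLin_pow]
      exact hk
    have := Nat.sInf_mem hne
    rw [Set.mem_setOf_eq, toEuclideanLin_pow, toEuclideanLin_pow] at this
    exact this
  have hker : ∀ m : ℕ, a ≤ m → LinearMap.ker (f ^ m) = LinearMap.ker (f ^ a) := by
    intro m hm
    have := Module.End.ker_pow_constant hasc (m - a)
    rw [Nat.add_sub_cancel' hm] at this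
    exact this.symm
  -- A itself is a partial isometry
  have hpi1 : ∀ x ∈ (LinearMap.ker f)ᗮ, ‖f x‖ = ‖x‖ := by
    have := hpi 1 le_rfl hj1
    simpa using this
  obtain ⟨-, hperp⟩ := contraction_of_pi f hpi1
  -- A ^ a is a partial isometry (also when a = 0)
  have hpa : ∀ x ∈ (LinearMap.ker (f ^ a))ᗮ, ‖(f ^ a) x‖ = ‖x‖ := by
    rcases Nat.eq_zero_or_pos a with h0 | h0
    · intro x _; simp [h0]
    · exact hpi a h0 (by omega)
  -- range of f ^ a is orthogonal to ker f
  have hR : ∀ w, (f ^ a) w ∈ (LinearMap.ker f)ᗮ := by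
    intro w
    obtain ⟨u, hu, v, hv, rfl⟩ := (LinearMap.ker (f ^ a)).exists_add_mem_mem_orthogonal w
    rw [map_add, LinearMap.mem_ker.mp hu, zero_add]
    apply hperp
    have hv' : v ∈ (LinearMap.ker (f ^ (a + 1)))ᗮ := by rw [← hasc]; exact hv
    have h1 : ‖(f ^ (a + 1)) v‖ = ‖v‖ := hpi (a + 1) (by omega) (by omega) v hv'
    have h2 : (f ^ (a + 1)) v = f ((f ^ a) v) := by
      rw [pow_succ']; rfl
    rw [h2] at h1
    rw [h1, hpa v hv]
  -- main claim
  have claim : ∀ m : ℕ, ∀ x ∈ (LinearMap.ker (f ^ a))ᗮ, ‖(f ^ (a + m)) x‖ = ‖x‖ := by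
    intro m
    induction m with
    | zero => simpa using hpa
    | succ m ih =>
        intro x hx
        have hy : (f ^ (a + m)) x ∈ (LinearMap.ker f)ᗮ := by
          have : (f ^ (a + m)) x = (f ^ a) ((f ^ m) x) := by
            rw [pow_add]; rfl
          rw [this]; exact hR _
        have h2 : (f ^ (a + (m + 1))) x = f ((f ^ (a + m)) x) := by
          rw [← add_assoc, pow_succ']; rfl
        rw [h2, hpi1 _ hy, ih x hx]
  -- conclude
  intro ℓ hℓ
  rcases le_or_gt ℓ j with hle | hgt
  · exact h ℓ hℓ hle
  · rw [Matrix.IsPartialIsometry, toEuclideanLin_pow]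
    intro x hx
    have haℓ : a ≤ ℓ := by omega
    rw [hker ℓ haℓ] at hx
    have := claim (ℓ - a) x hx
    rwa [Nat.add_sub_cancel' haℓ] at this


end
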